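/- Let H be an inner product space, a₁,…,aₘ orthonormal vectors in H, and x₁,…,xₙ ∈ H \ {0} satisfying 0 ≤ rₖ ≤ Re⟨xᵢ, aₖ⟩ / ‖xᵢ‖ for all i ∈ {1,…,n} and k ∈ {1,…,m}. Then (∑ₖ rₖ²)^{1/2} · ∑ᵢ ‖xᵢ‖ ≤ ‖∑ᵢ xᵢ‖. -/

import Mathlib

theorem stmt_1 {𝕂 H : Type*} [RCLike 𝕂] [NormedAddCommGroup H] [InnerProductSpace 𝕂 H]
    {m n : ℕ} (a : Fin m → H) (ha : Orthonormal 𝕂 a)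
    (x : Fin n → H) (hx : ∀ i, x i ≠ 0) (r : Fin m → ℝ)
    (hr : ∀ k, 0 ≤ r k)
    (h : ∀ i k, r k ≤ RCLike.re (@inner 𝕂 _ _ (x i) (a k)) / ‖x i‖) :
    Real.sqrt (∑ k, (r k) ^ 2) * ∑ i, ‖x i‖ ≤ ‖∑ i, x i‖ := by
  set R : ℝ := ∑ k, (r k) ^ 2 with hR
  have hR0 : 0 ≤ R := Finset.sum_nonneg fun k _ => sq_nonneg _
  rcases eq_or_lt_of_le hR0 with hR0' | hRpos
  · rw [← hR0', Real.sqrt_zero, zero_mul]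
    exact norm_nonneg _
  set v : H := ∑ k, ((r k : 𝕂)) • a k with hv
  have hvv : (@inner 𝕂 _ _ v v) = (R : 𝕂) := by
    rw [hv, ha.inner_sum]
    rw [hR, RCLike.ofReal_sum]
    exact Finset.sum_congr rfl fun k _ => by rw [RCLike.conj_ofReal]; push_cast; ring
  have hnormv : ‖v‖ = Real.sqrt R := by
    have h1 := @inner_self_eq_norm_sq 𝕂 _ _ _ _ v
    rw [hvv] at h1
    have h2 : ‖v‖ ^ 2 = R := by
      simpa using congrArg RCLike.re h1.symm
    rw [← h2, Real.sqrt_sq (norm_nonneg _)]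
  have key : ∀ i, R * ‖x i‖ ≤ RCLike.re (@inner 𝕂 _ _ (x i) v) := by
    intro i
    have hxi : 0 < ‖x i‖ := norm_pos_iff.mpr (hx i)
    have hre : RCLike.re (@inner 𝕂 _ _ (x i) v)
        = ∑ k, r k * RCLike.re (@inner 𝕂 _ _ (x i) (a k)) := by
      rw [hv, inner_sum, map_sum]
      refine Finset.sum_congr rfl fun k _ => ?_
      rw [inner_smul_right]
      simp [RCLike.re_ofReal_mul]
    rw [hre, hR, Finset.sum_mul]
    refine Finset.sum_le_sum fun k _ => ?_
    have h1 : r k * ‖x i‖ ≤ RCLike.re (@inner 𝕂 _ _ (x i) (a k)) :=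
      (le_div_iff₀ hxi).mp (h i k)
    calc r k ^ 2 * ‖x i‖ = r k * (r k * ‖x i‖) := by ring
      _ ≤ r k * RCLike.re (@inner 𝕂 _ _ (x i) (a k)) :=
          mul_le_mul_of_nonneg_left h1 (hr k)
  have main : R * ∑ i, ‖x i‖ ≤ ‖∑ i, x i‖ * Real.sqrt R := by
    calc R * ∑ i, ‖x i‖ = ∑ i, R * ‖x i‖ := by rw [Finset.mul_sum]
      _ ≤ ∑ i, RCLike.re (@inner 𝕂 _ _ (x i) v) := Finset.sum_le_sum fun i _ => key i
      _ = RCLike.re (@inner 𝕂 _ _ (∑ i, x i) v) := by rw [sum_inner, map_sum]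
      _ ≤ ‖∑ i, x i‖ * ‖v‖ := re_inner_le_norm _ _
      _ = ‖∑ i, x i‖ * Real.sqrt R := by rw [hnormv]
  have hs : 0 < Real.sqrt R := Real.sqrt_pos.mpr hRpos
  rw [← mul_le_mul_iff_of_pos_right hs]
  calc Real.sqrt R * (∑ i, ‖x i‖) * Real.sqrt R
      = R * ∑ i, ‖x i‖ := by rw [mul_comm _ (Real.sqrt R), ← mul_assoc, Real.mul_self_sqrt hR0]
    _ ≤ ‖∑ i, x i‖ * Real.sqrt R := main
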